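/- arXiv:2201.03150 — 2 statements merged into one kernel-verified Lean document; each statement's English description precedes it below -/
import Mathlib

section
/- Let π : (X,G) → (Y,G) be a factor map between G-systems. Then the relative upper entropy dimension D̄(X,G|π) equals the supremum of D̄(G,W|π) over all standard covers W of X, where a standard cover is an open cover consisting of two non-dense open sets. -/
open Filter Topology Pointwise
open scoped ENNReal

/-- A Følner sequence for a group `G`. -/
def IsFolnerSeq (G : Type*) [Group G] (F : ℕ → Finset G) : Prop :=
  (∀ n, (F n).Nonempty) ∧
    ∀ (K : Finset G) (δ : ℝ), 0 < δ →
      ∀ᶠ n in atTop,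
        ((symmDiff ((K : Set G) * ((F n : Set G))) ((F n : Set G))).ncard : ℝ) <
          δ * ((F n).card : ℝ)

/-- Amenability of a (countable discrete) group via almost invariant finite sets. -/
def IsAmenableGrp (G : Type*) [Group G] : Prop :=
  ∀ K : Finset G, K.Nonempty → ∀ δ : ℝ, 0 < δ →
    ∃ F : Finset G, F.Nonempty ∧
      ((symmDiff ((K : Set G) * (F : Set G)) (F : Set G)).ncard : ℝ) < δ * (F.card : ℝ)

/-- The finite set `A ∩ S`. -/
noncomputable def interF {G : Type*} (A : Finset G) (S : Set G) : Finset G :=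
  @Finset.filter G (fun g => g ∈ S) (Classical.decPred _) A

/-- `S` belongs to `𝓘(G)` : `|S ∩ F n| → ∞`. -/
def InI {G : Type*} (F : ℕ → Finset G) (S : Set G) : Prop :=
  Tendsto (fun n => (interF (F n) S).card) atTop atTop

/-- `D̄(S, α) = limsup_n |S ∩ F n| / |F n|^α`. -/
noncomputable def DbarAt {G : Type*} (F : ℕ → Finset G) (S : Set G) (α : ℝ) : ℝ≥0∞ :=
  atTop.limsup fun n =>
    ((interF (F n) S).card : ℝ≥0∞) / ENNReal.ofReal (((F n).card : ℝ) ^ α)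

/-- `D̲(S, α) = liminf_n |S ∩ F n| / |F n|^α`. -/
noncomputable def DlowAt {G : Type*} (F : ℕ → Finset G) (S : Set G) (α : ℝ) : ℝ≥0∞ :=
  atTop.liminf fun n =>
    ((interF (F n) S).card : ℝ≥0∞) / ENNReal.ofReal (((F n).card : ℝ) ^ α)

/-- The upper dimension `D̄(S)` of a subset `S ⊆ G`. -/
noncomputable def upperDim {G : Type*} (F : ℕ → Finset G) (S : Set G) : ℝ :=
  sInf {α : ℝ | 0 ≤ α ∧ DbarAt F S α = 0}

/-- The lower dimension `D̲(S)` of a subset `S ⊆ G`. -/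
noncomputable def lowerDim {G : Type*} (F : ℕ → Finset G) (S : Set G) : ℝ :=
  sInf {α : ℝ | 0 ≤ α ∧ DlowAt F S α = 0}

/-- A finite open cover of `X`. -/
def IsOpenCover {X : Type*} [TopologicalSpace X] (𝒰 : Set (Set X)) : Prop :=
  𝒰.Finite ∧ (∀ U ∈ 𝒰, IsOpen U) ∧ ⋃₀ 𝒰 = Set.univ

/-- Minimal number of members of `𝒰` needed to cover `E`. -/
noncomputable def coverNum {X : Type*} (𝒰 : Set (Set X)) (E : Set X) : ℕ :=
  sInf {k | ∃ t : Finset (Set X), ↑t ⊆ 𝒰 ∧ t.card = k ∧ E ⊆ ⋃₀ (t : Set (Set X))}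

/-- `N(𝒰 | π) = sup_y` of the covering number of the fiber `π ⁻¹ y`. -/
noncomputable def NRel {X Y : Type*} (𝒰 : Set (Set X)) (π : X → Y) : ℕ :=
  ⨆ y : Y, coverNum 𝒰 (π ⁻¹' {y})

/-- A factor map between `G`-systems. -/
def IsFactorMap (G : Type*) {X Y : Type*} [Group G] [TopologicalSpace X] [TopologicalSpace Y]
    [MulAction G X] [MulAction G Y] (π : X → Y) : Prop :=
  Continuous π ∧ Function.Surjective π ∧ ∀ (g : G) (x : X), π (g • x) = g • π x

/-- The join `⋁_{g ∈ B} g⁻¹ 𝒰`. -/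
def dynJoin {G X : Type*} [Group G] [MulAction G X] (B : Finset G) (𝒰 : Set (Set X)) :
    Set (Set X) :=
  {W | ∃ f : G → Set X, (∀ g ∈ B, f g ∈ 𝒰) ∧ W = ⋂ g ∈ B, (fun x => g • x) ⁻¹' f g}

/-- `h̄(G, 𝒰, α | π)`. -/
noncomputable def hRelU {G X Y : Type*} [Group G] [MulAction G X]
    (F : ℕ → Finset G) (𝒰 : Set (Set X)) (π : X → Y) (α : ℝ) : ℝ≥0∞ :=
  atTop.limsup fun n =>
    ENNReal.ofReal (Real.log (NRel (dynJoin (F n) 𝒰) π)) /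
      ENNReal.ofReal (((F n).card : ℝ) ^ α)

/-- `h̲(G, 𝒰, α | π)`. -/
noncomputable def hRelL {G X Y : Type*} [Group G] [MulAction G X]
    (F : ℕ → Finset G) (𝒰 : Set (Set X)) (π : X → Y) (α : ℝ) : ℝ≥0∞ :=
  atTop.liminf fun n =>
    ENNReal.ofReal (Real.log (NRel (dynJoin (F n) 𝒰) π)) /
      ENNReal.ofReal (((F n).card : ℝ) ^ α)

/-- The relative upper entropy dimension `D̄(G, 𝒰 | π)` of a cover. -/
noncomputable def DU {G X Y : Type*} [Group G] [MulAction G X]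
    (F : ℕ → Finset G) (𝒰 : Set (Set X)) (π : X → Y) : ℝ :=
  sInf {α : ℝ | 0 ≤ α ∧ hRelU F 𝒰 π α = 0}

/-- The relative lower entropy dimension `D̲(G, 𝒰 | π)` of a cover. -/
noncomputable def DL {G X Y : Type*} [Group G] [MulAction G X]
    (F : ℕ → Finset G) (𝒰 : Set (Set X)) (π : X → Y) : ℝ :=
  sInf {α : ℝ | 0 ≤ α ∧ hRelL F 𝒰 π α = 0}

/-- The relative upper entropy dimension `D̄(X, G | π)` of the system. -/
noncomputable def DUSys {G X Y : Type*} [Group G] [TopologicalSpace X] [MulAction G X]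
    (F : ℕ → Finset G) (π : X → Y) : ℝ :=
  sSup {d : ℝ | ∃ 𝒰 : Set (Set X), IsOpenCover 𝒰 ∧ d = DU F 𝒰 π}

/-- The relative lower entropy dimension `D̲(X, G | π)` of the system. -/
noncomputable def DLSys {G X Y : Type*} [Group G] [TopologicalSpace X] [MulAction G X]
    (F : ℕ → Finset G) (π : X → Y) : ℝ :=
  sSup {d : ℝ | ∃ 𝒰 : Set (Set X), IsOpenCover 𝒰 ∧ d = DL F 𝒰 π}

/-- `(1 / |F n ∩ S|) log N(⋁_{g ∈ F n ∩ S} g⁻¹ 𝒰 | π)`. -/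
noncomputable def entAlong {G X Y : Type*} [Group G] [MulAction G X]
    (F : ℕ → Finset G) (S : Set G) (𝒰 : Set (Set X)) (π : X → Y) : ℕ → ℝ≥0∞ :=
  fun n =>
    ENNReal.ofReal (Real.log (NRel (dynJoin (interF (F n) S) 𝒰) π)) /
      ((interF (F n) S).card : ℝ≥0∞)

/-- `S` is a relative entropy generating set of `𝒰` relative to `π`. -/
def IsEntGen {G X Y : Type*} [Group G] [MulAction G X]
    (F : ℕ → Finset G) (S : Set G) (𝒰 : Set (Set X)) (π : X → Y) : Prop :=
  InI F S ∧ 0 < atTop.liminf (entAlong F S 𝒰 π)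

/-- `S ∈ 𝒫(G, 𝒰 | π)` : positive relative upper entropy along `S`. -/
def InP {G X Y : Type*} [Group G] [MulAction G X]
    (F : ℕ → Finset G) (S : Set G) (𝒰 : Set (Set X)) (π : X → Y) : Prop :=
  InI F S ∧ 0 < atTop.limsup (entAlong F S 𝒰 π)

/-- `D̄_e(G, 𝒰 | π)`. -/
noncomputable def DeU {G X Y : Type*} [Group G] [MulAction G X]
    (F : ℕ → Finset G) (𝒰 : Set (Set X)) (π : X → Y) : ℝ :=
  sSup {d : ℝ | ∃ S : Set G, IsEntGen F S 𝒰 π ∧ d = upperDim F S}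

/-- `D̲_e(G, 𝒰 | π)`. -/
noncomputable def DeL {G X Y : Type*} [Group G] [MulAction G X]
    (F : ℕ → Finset G) (𝒰 : Set (Set X)) (π : X → Y) : ℝ :=
  sSup {d : ℝ | ∃ S : Set G, IsEntGen F S 𝒰 π ∧ d = lowerDim F S}

/-- `D̄_p(G, 𝒰 | π)`. -/
noncomputable def DpU {G X Y : Type*} [Group G] [MulAction G X]
    (F : ℕ → Finset G) (𝒰 : Set (Set X)) (π : X → Y) : ℝ :=
  sSup {d : ℝ | ∃ S : Set G, InP F S 𝒰 π ∧ d = upperDim F S}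

/-- `D̲_p(G, 𝒰 | π)`. -/
noncomputable def DpL {G X Y : Type*} [Group G] [MulAction G X]
    (F : ℕ → Finset G) (𝒰 : Set (Set X)) (π : X → Y) : ℝ :=
  sSup {d : ℝ | ∃ S : Set G, InP F S 𝒰 π ∧ d = lowerDim F S}

/-- `D̄_e(X, G | π)`. -/
noncomputable def DeUSys {G X Y : Type*} [Group G] [TopologicalSpace X] [MulAction G X]
    (F : ℕ → Finset G) (π : X → Y) : ℝ :=
  sSup {d : ℝ | ∃ 𝒰 : Set (Set X), IsOpenCover 𝒰 ∧ d = DeU F 𝒰 π}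

/-- `D̲_p(X, G | π)`. -/
noncomputable def DpLSys {G X Y : Type*} [Group G] [TopologicalSpace X] [MulAction G X]
    (F : ℕ → Finset G) (π : X → Y) : ℝ :=
  sSup {d : ℝ | ∃ 𝒰 : Set (Set X), IsOpenCover 𝒰 ∧ d = DpL F 𝒰 π}

/-- The cover `{X ∖ cl B(x i, 1/k) : i}` associated with a tuple. -/
def ballCover {X : Type*} [MetricSpace X] {n : ℕ} (x : Fin n → X) (k : ℕ) : Set (Set X) :=
  {V | ∃ i : Fin n, V = (Metric.closedBall (x i) (1 / (k : ℝ)))ᶜ}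

/-- The relative entropy dimension `D̄(x₁, …, x_n | π)` of a tuple. -/
noncomputable def tupleDim {G X Y : Type*} [Group G] [MetricSpace X] [MulAction G X] {n : ℕ}
    (F : ℕ → Finset G) (x : Fin n → X) (π : X → Y) : ℝ :=
  limUnder atTop fun k : ℕ => DU F (ballCover x k) π

/-- The tuple lies on the diagonal. -/
def IsDiag {X : Type*} {n : ℕ} (x : Fin n → X) : Prop := ∀ i j, x i = x j

/-- The `n`-th relative dimension set `𝒟_n(X, G | π)`. -/
noncomputable def dimSet {G X Z : Type*} [Group G] [MetricSpace X] [MulAction G X]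
    (F : ℕ → Finset G) (π : X → Z) (n : ℕ) : Set ℝ :=
  {α : ℝ | 0 ≤ α ∧ ∃ x : Fin n → X, ¬ IsDiag x ∧ tupleDim F x π = α}

/-- The translated cover `g𝒰`. -/
def smulCover {G X : Type*} [SMul G X] (g : G) (𝒰 : Set (Set X)) : Set (Set X) :=
  (fun U => (fun x => g • x) '' U) '' 𝒰

/-- The join `𝒰 ∨ 𝒱` of two covers. -/
def covJoin {X : Type*} (𝒰 𝒱 : Set (Set X)) : Set (Set X) :=
  {W | ∃ U ∈ 𝒰, ∃ V ∈ 𝒱, W = U ∩ V}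

/-- A standard cover: two non-dense open sets covering `X`. -/
def IsStandardCover {X : Type*} [TopologicalSpace X] (𝒲 : Set (Set X)) : Prop :=
  ∃ U V : Set X, 𝒲 = {U, V} ∧ IsOpen U ∧ IsOpen V ∧ U ∪ V = Set.univ ∧
    ¬ Dense U ∧ ¬ Dense V



section AuxLemmas

variable {G X Y : Type*} [Group G]

lemma coverNum_le_card {𝒱 : Set (Set X)} {E : Set X} (t : Finset (Set X))
    (h1 : ↑t ⊆ 𝒱) (h2 : E ⊆ ⋃₀ (t : Set (Set X))) : coverNum 𝒱 E ≤ t.card :=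
  Nat.sInf_le ⟨t, h1, rfl, h2⟩

variable [MulAction G X]

lemma exists_fine_cover {𝒰 : Set (Set X)} (hfin : 𝒰.Finite) (hcov : ⋃₀ 𝒰 = Set.univ)
    (B : Finset G) :
    ∃ t : Finset (Set X), ↑t ⊆ dynJoin B 𝒰 ∧ Set.univ ⊆ ⋃₀ (t : Set (Set X)) ∧
      t.card ≤ hfin.toFinset.card ^ B.card := by
  classical
  set 𝒱 := hfin.toFinset with h𝒱
  let Θ : ({g // g ∈ B} → {U // U ∈ 𝒱}) → Set X :=
    fun f => ⋂ g : {g // g ∈ B}, (fun x => (g : G) • x) ⁻¹' (f g : Set X)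
  refine ⟨Finset.univ.image Θ, ?_, ?_, ?_⟩
  · rintro W hW
    simp only [Finset.coe_image, Set.mem_image, Finset.mem_coe, Finset.mem_univ] at hW
    obtain ⟨f, -, rfl⟩ := hW
    refine ⟨fun g => if h : g ∈ B then (f ⟨g, h⟩ : Set X) else ∅, fun g hg => ?_, ?_⟩
    · simpa only [dif_pos hg] using hfin.mem_toFinset.mp (f ⟨g, hg⟩).2
    · ext x
      simp only [Θ, Set.mem_iInter, Set.mem_preimage]
      constructor
      · intro h g hg; simpa only [dif_pos hg] using h ⟨g, hg⟩
      · intro h g; simpa only [dif_pos g.2] using h g g.2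
  · intro x _
    have hx : ∀ g : {g // g ∈ B}, ∃ U, U ∈ 𝒱 ∧ (g : G) • x ∈ U := by
      intro g
      have : (g : G) • x ∈ ⋃₀ 𝒰 := by rw [hcov]; trivial
      obtain ⟨U, hU, hxU⟩ := this
      exact ⟨U, hfin.mem_toFinset.mpr hU, hxU⟩
    choose U hU1 hU2 using hx
    refine Set.mem_sUnion.mpr ⟨Θ (fun g => ⟨U g, hU1 g⟩), ?_, ?_⟩
    · simp only [Finset.coe_image, Set.mem_image, Finset.mem_coe]
      exact ⟨_, Finset.mem_coe.mpr (Finset.mem_univ _), rfl⟩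
    · exact Set.mem_iInter.mpr fun g => hU2 g
  · refine (Finset.card_image_le).trans ?_
    rw [Finset.card_univ, Fintype.card_fun, Fintype.card_coe, Fintype.card_coe]

lemma dynJoin_mem_of_forall {𝒰 : Set (Set X)} (hcov : ⋃₀ 𝒰 = Set.univ) (B : Finset G) (x : X) :
    ∃ T ∈ dynJoin B 𝒰, x ∈ T := by
  have h : ∀ g : G, ∃ U, U ∈ 𝒰 ∧ g • x ∈ U := by
    intro g
    have : g • x ∈ ⋃₀ 𝒰 := by rw [hcov]; trivial
    obtain ⟨U, hU, hxU⟩ := this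
    exact ⟨U, hU, hxU⟩
  choose U h1 h2 using h
  exact ⟨_, ⟨U, fun g _ => h1 g, rfl⟩, Set.mem_iInter₂.mpr fun g _ => h2 g⟩

lemma NRel_le {𝒱 : Set (Set X)} {π : X → Y} {K : ℕ}
    (h : ∀ y : Y, coverNum 𝒱 (π ⁻¹' {y}) ≤ K) : NRel 𝒱 π ≤ K := ciSup_le' h

lemma le_NRel {𝒱 : Set (Set X)} {π : X → Y} {K : ℕ}
    (h : ∀ y : Y, coverNum 𝒱 (π ⁻¹' {y}) ≤ K) (y : Y) :
    coverNum 𝒱 (π ⁻¹' {y}) ≤ NRel 𝒱 π :=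
  le_ciSup ⟨K, by rintro _ ⟨y', rfl⟩; exact h y'⟩ y

end AuxLemmas

section AuxLemmas2

variable {G X Y : Type*} [Group G] [MulAction G X]

lemma dynJoin_refine {𝒰 : Set (Set X)} {ι : Type*} (W : ι → Set (Set X))
    (href : ∀ c : ι → Set X, (∀ i, c i ∈ W i) → ∃ U ∈ 𝒰, (⋂ i, c i) ⊆ U)
    (B : Finset G) (c : ι → Set X) (hc : ∀ i, c i ∈ dynJoin B (W i)) :
    ∃ T ∈ dynJoin B 𝒰, (⋂ i, c i) ⊆ T := by
  classical
  choose f hf1 hf2 using hc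
  have hU : ∀ g : G, ∃ U, (g ∈ B → U ∈ 𝒰 ∧ (⋂ i, f i g) ⊆ U) := by
    intro g
    by_cases hg : g ∈ B
    · obtain ⟨U, hU, hsub⟩ := href (fun i => f i g) (fun i => hf1 i g hg)
      exact ⟨U, fun _ => ⟨hU, hsub⟩⟩
    · exact ⟨∅, fun h => absurd h hg⟩
  choose U hU using hU
  refine ⟨⋂ g ∈ B, (fun x => g • x) ⁻¹' U g, ⟨U, fun g hg => (hU g hg).1, rfl⟩, ?_⟩
  intro x hx
  refine Set.mem_iInter₂.mpr fun g hg => (hU g hg).2 ?_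
  refine Set.mem_iInter.mpr fun i => ?_
  have : x ∈ c i := Set.mem_iInter.mp hx i
  rw [hf2 i] at this
  exact Set.mem_iInter₂.mp this g hg

lemma coverNum_join_le_prod {𝒰 : Set (Set X)} {ι : Type*} [Fintype ι] (W : ι → Set (Set X))
    (hWfin : ∀ i, (W i).Finite) (hWcov : ∀ i, ⋃₀ W i = Set.univ)
    (href : ∀ c : ι → Set X, (∀ i, c i ∈ W i) → ∃ U ∈ 𝒰, (⋂ i, c i) ⊆ U)
    (B : Finset G) (E : Set X) :
    coverNum (dynJoin B 𝒰) E ≤ ∏ i, coverNum (dynJoin B (W i)) E := by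
  classical
  have hne : ∀ i, {k | ∃ t : Finset (Set X), ↑t ⊆ dynJoin B (W i) ∧ t.card = k ∧
      E ⊆ ⋃₀ (t : Set (Set X))}.Nonempty := by
    intro i
    obtain ⟨t, ht1, ht2, -⟩ := exists_fine_cover (hWfin i) (hWcov i) B
    exact ⟨t.card, t, ht1, rfl, fun x hx => ht2 (Set.mem_univ x)⟩
  have hmem : ∀ i, ∃ t : Finset (Set X), ↑t ⊆ dynJoin B (W i) ∧
      t.card = coverNum (dynJoin B (W i)) E ∧ E ⊆ ⋃₀ (t : Set (Set X)) := by
    intro i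
    have := Nat.sInf_mem (hne i)
    obtain ⟨t, h1, h2, h3⟩ := this
    exact ⟨t, h1, h2, h3⟩
  choose t ht1 ht2 ht3 using hmem
  have hT : ∀ c : ι → Set X, ∃ T, (∀ i, c i ∈ dynJoin B (W i)) →
      T ∈ dynJoin B 𝒰 ∧ (⋂ i, c i) ⊆ T := by
    intro c
    by_cases hc : ∀ i, c i ∈ dynJoin B (W i)
    · obtain ⟨T, hT1, hT2⟩ := dynJoin_refine W href B c hc
      exact ⟨T, fun _ => ⟨hT1, hT2⟩⟩
    · exact ⟨∅, fun h => absurd h hc⟩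
  choose T hT using hT
  refine le_trans (coverNum_le_card ((Fintype.piFinset t).image T) ?_ ?_) ?_
  · rintro W' hW'
    simp only [Finset.coe_image, Set.mem_image, Finset.mem_coe,
      Fintype.mem_piFinset] at hW'
    obtain ⟨c, hcmem, rfl⟩ := hW'
    exact (hT c fun i => ht1 i (hcmem i)).1
  · intro x hx
    have : ∀ i, ∃ s, s ∈ t i ∧ x ∈ s := by
      intro i
      obtain ⟨s, hs1, hs2⟩ := Set.mem_sUnion.mp (ht3 i hx)
      exact ⟨s, hs1, hs2⟩
    choose c hc1 hc2 using this
    refine Set.mem_sUnion.mpr ⟨T c, ?_, ?_⟩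
    · simp only [Finset.coe_image, Set.mem_image, Finset.mem_coe, Fintype.mem_piFinset]
      exact ⟨c, hc1, rfl⟩
    · exact (hT c fun i => ht1 i (hc1 i)).2 (Set.mem_iInter.mpr hc2)
  · calc ((Fintype.piFinset t).image T).card ≤ (Fintype.piFinset t).card :=
        Finset.card_image_le
    _ = ∏ i, (t i).card := by rw [Fintype.card_piFinset]
    _ = ∏ i, coverNum (dynJoin B (W i)) E := by
        exact Finset.prod_congr rfl fun i _ => ht2 i

lemma one_le_NRel {𝒰 : Set (Set X)} {π : X → Y} (hfin : 𝒰.Finite)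
    (hcov : ⋃₀ 𝒰 = Set.univ) (hsurj : Function.Surjective π) (y : Y) (B : Finset G) :
    1 ≤ NRel (dynJoin B 𝒰) π := by
  obtain ⟨t, ht1, ht2, ht3⟩ := exists_fine_cover hfin hcov B
  have hbdd : ∀ y' : Y, coverNum (dynJoin B 𝒰) (π ⁻¹' {y'}) ≤ t.card := fun y' =>
    coverNum_le_card t ht1 fun x hx => ht2 (Set.mem_univ x)
  refine le_trans ?_ (le_NRel hbdd y)
  rw [Nat.one_le_iff_ne_zero]
  intro h0
  rcases Nat.sInf_eq_zero.mp h0 with h | h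
  · obtain ⟨s, hs1, hs2, hs3⟩ := h
    obtain ⟨x, hx⟩ := hsurj y
    have := hs3 (show x ∈ π ⁻¹' {y} by simp [hx])
    rw [Finset.card_eq_zero.mp hs2] at this
    simpa using this
  · have hmem : t.card ∈ {k | ∃ s : Finset (Set X), ↑s ⊆ dynJoin B 𝒰 ∧ s.card = k ∧
        π ⁻¹' {y} ⊆ ⋃₀ (s : Set (Set X))} := ⟨t, ht1, rfl, fun x hx => ht2 (Set.mem_univ x)⟩
    rw [h] at hmem
    exact hmem

lemma NRel_join_le_prod {𝒰 : Set (Set X)} {π : X → Y} {ι : Type*} [Fintype ι]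
    (W : ι → Set (Set X)) (hWfin : ∀ i, (W i).Finite) (hWcov : ∀ i, ⋃₀ W i = Set.univ)
    (href : ∀ c : ι → Set X, (∀ i, c i ∈ W i) → ∃ U ∈ 𝒰, (⋂ i, c i) ⊆ U)
    (B : Finset G) :
    NRel (dynJoin B 𝒰) π ≤ ∏ i, NRel (dynJoin B (W i)) π := by
  refine NRel_le fun y => le_trans (coverNum_join_le_prod W hWfin hWcov href B _) ?_
  refine Finset.prod_le_prod' fun i _ => ?_
  obtain ⟨t, ht1, ht2, ht3⟩ := exists_fine_cover (hWfin i) (hWcov i) B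
  exact le_NRel (fun y' => coverNum_le_card t ht1 fun x hx => ht2 (Set.mem_univ x)) y

end AuxLemmas2

section AuxLemmas3

variable {G X Y : Type*} [Group G] [MulAction G X]

lemma DU_nonneg (F : ℕ → Finset G) (𝒰 : Set (Set X)) (π : X → Y) : 0 ≤ DU F 𝒰 π := by
  unfold DU
  rcases Set.eq_empty_or_nonempty {α : ℝ | 0 ≤ α ∧ hRelU F 𝒰 π α = 0} with h | h
  · rw [h, Real.sInf_empty]
  · exact le_csInf h fun b hb => hb.1

lemma DU_le_of_mem {F : ℕ → Finset G} {𝒰 : Set (Set X)} {π : X → Y} {α : ℝ}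
    (h0 : 0 ≤ α) (h : hRelU F 𝒰 π α = 0) : DU F 𝒰 π ≤ α :=
  csInf_le ⟨0, fun b hb => hb.1⟩ ⟨h0, h⟩

lemma DU_eq_zero_of_zero_mem {F : ℕ → Finset G} {𝒰 : Set (Set X)} {π : X → Y}
    (h : hRelU F 𝒰 π 0 = 0) : DU F 𝒰 π = 0 :=
  le_antisymm (DU_le_of_mem le_rfl h) (DU_nonneg F 𝒰 π)

lemma hRelU_mono {F : ℕ → Finset G} {𝒰 : Set (Set X)} {π : X → Y} {α β : ℝ}
    (hFne : ∀ n, (F n).Nonempty) (h0 : 0 ≤ α) (hab : α ≤ β) :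
    hRelU F 𝒰 π β ≤ hRelU F 𝒰 π α := by
  refine limsup_le_limsup (Eventually.of_forall fun n => ?_)
  refine ENNReal.div_le_div_left (ENNReal.ofReal_le_ofReal ?_) _
  have h1 : (1 : ℝ) ≤ ((F n).card : ℝ) := by
    exact_mod_cast Nat.one_le_iff_ne_zero.mpr (Finset.card_ne_zero_of_mem (hFne n).choose_spec)
  exact Real.rpow_le_rpow_of_exponent_le h1 hab

lemma hRelU_zero_of_eventually_le_tendsto {F : ℕ → Finset G} {𝒰 : Set (Set X)} {π : X → Y}
    {α : ℝ} {w : ℕ → ℝ≥0∞}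
    (hle : ∀ n, ENNReal.ofReal (Real.log (NRel (dynJoin (F n) 𝒰) π)) /
      ENNReal.ofReal (((F n).card : ℝ) ^ α) ≤ w n)
    (hw : Tendsto w atTop (nhds 0)) : hRelU F 𝒰 π α = 0 := by
  refine le_antisymm ?_ zero_le
  calc hRelU F 𝒰 π α ≤ atTop.limsup w := limsup_le_limsup (Eventually.of_forall hle)
  _ = 0 := hw.limsup_eq

lemma tendsto_zero_of_hRelU_zero {F : ℕ → Finset G} {𝒰 : Set (Set X)} {π : X → Y} {α : ℝ}
    (h : hRelU F 𝒰 π α = 0) :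
    Tendsto (fun n => ENNReal.ofReal (Real.log (NRel (dynJoin (F n) 𝒰) π)) /
      ENNReal.ofReal (((F n).card : ℝ) ^ α)) atTop (nhds 0) := by
  refine tendsto_of_liminf_eq_limsup ?_ h
  refine le_antisymm ?_ zero_le
  calc atTop.liminf _ ≤ atTop.limsup _ := liminf_le_limsup
  _ = 0 := h

lemma hRelU_eq_zero_of_refine {F : ℕ → Finset G} {𝒰 : Set (Set X)} {π : X → Y}
    {ι : Type*} [Fintype ι] {W : ι → Set (Set X)}
    (hWfin : ∀ i, (W i).Finite) (hWcov : ∀ i, ⋃₀ W i = Set.univ)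
    (href : ∀ c : ι → Set X, (∀ i, c i ∈ W i) → ∃ U ∈ 𝒰, (⋂ i, c i) ⊆ U)
    (hfin : 𝒰.Finite) (hcov : ⋃₀ 𝒰 = Set.univ)
    (hsurj : Function.Surjective π) (y₀ : Y) {α : ℝ}
    (hW0 : ∀ i, hRelU F (W i) π α = 0) : hRelU F 𝒰 π α = 0 := by
  classical
  set N : ι → ℕ → ℕ := fun i n => NRel (dynJoin (F n) (W i)) π with hN
  set d : ℕ → ℝ≥0∞ := fun n => ENNReal.ofReal (((F n).card : ℝ) ^ α) with hd
  have hone : ∀ i n, 1 ≤ N i n := fun i n => one_le_NRel (hWfin i) (hWcov i) hsurj y₀ (F n)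
  have hone0 : ∀ n, 1 ≤ NRel (dynJoin (F n) 𝒰) π := fun n =>
    one_le_NRel hfin hcov hsurj y₀ (F n)
  have hlog : ∀ n, Real.log (NRel (dynJoin (F n) 𝒰) π) ≤ ∑ i, Real.log (N i n) := by
    intro n
    have h1 : (NRel (dynJoin (F n) 𝒰) π : ℝ) ≤ ((∏ i, N i n : ℕ) : ℝ) := by
      exact_mod_cast NRel_join_le_prod W hWfin hWcov href (F n)
    have h2 : (0 : ℝ) < (NRel (dynJoin (F n) 𝒰) π : ℝ) := by exact_mod_cast hone0 n
    calc Real.log (NRel (dynJoin (F n) 𝒰) π) ≤ Real.log ((∏ i, N i n : ℕ) : ℝ) :=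
        Real.log_le_log h2 h1
    _ = ∑ i, Real.log (N i n) := by
        rw [Nat.cast_prod]
        exact Real.log_prod fun i _ =>
          Nat.cast_ne_zero.mpr (Nat.one_le_iff_ne_zero.mp (hone i n))
  refine hRelU_zero_of_eventually_le_tendsto (w := fun n => ∑ i,
    ENNReal.ofReal (Real.log (N i n)) / d n) (fun n => ?_) ?_
  · calc ENNReal.ofReal (Real.log (NRel (dynJoin (F n) 𝒰) π)) / d n
        ≤ ENNReal.ofReal (∑ i, Real.log (N i n)) / d n :=
          ENNReal.div_le_div_right (ENNReal.ofReal_le_ofReal (hlog n)) _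
    _ = (∑ i, ENNReal.ofReal (Real.log (N i n))) / d n := by
          rw [ENNReal.ofReal_sum_of_nonneg fun i _ =>
            Real.log_natCast_nonneg _]
    _ = ∑ i, ENNReal.ofReal (Real.log (N i n)) / d n := by
          simp only [div_eq_mul_inv, Finset.sum_mul]
  · have := tendsto_finset_sum (Finset.univ : Finset ι)
      (fun i _ => tendsto_zero_of_hRelU_zero (hW0 i))
    simpa using this

end AuxLemmas3

section AuxLemmas4

variable {G X Y : Type*} [Group G] [MulAction G X]

lemma hRelU_two_eq_zero {F : ℕ → Finset G} {𝒰 : Set (Set X)} {π : X → Y}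
    (hfin : 𝒰.Finite) (hcov : ⋃₀ 𝒰 = Set.univ) (hsurj : Function.Surjective π)
    (x₀ : X) (hc : Tendsto (fun n => (F n).card) atTop atTop) :
    hRelU F 𝒰 π 2 = 0 := by
  classical
  set M := hfin.toFinset.card with hM
  have hM1 : 1 ≤ M := by
    have : x₀ ∈ ⋃₀ 𝒰 := by rw [hcov]; trivial
    obtain ⟨U, hU, -⟩ := this
    exact Finset.card_pos.mpr ⟨U, hfin.mem_toFinset.mpr hU⟩
  have hlogM : 0 ≤ Real.log M := Real.log_natCast_nonneg M
  have hNle : ∀ n, NRel (dynJoin (F n) 𝒰) π ≤ M ^ (F n).card := by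
    intro n
    obtain ⟨t, ht1, ht2, ht3⟩ := exists_fine_cover hfin hcov (F n)
    exact NRel_le fun y => le_trans (coverNum_le_card t ht1 fun x hx =>
      ht2 (Set.mem_univ x)) ht3
  have hone0 : ∀ n, 1 ≤ NRel (dynJoin (F n) 𝒰) π := fun n =>
    one_le_NRel hfin hcov hsurj (π x₀) (F n)
  have hlog : ∀ n, Real.log (NRel (dynJoin (F n) 𝒰) π) ≤ ((F n).card : ℝ) * Real.log M := by
    intro n
    have h2 : (0 : ℝ) < (NRel (dynJoin (F n) 𝒰) π : ℝ) := by exact_mod_cast hone0 n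
    calc Real.log (NRel (dynJoin (F n) 𝒰) π) ≤ Real.log ((M ^ (F n).card : ℕ) : ℝ) :=
        Real.log_le_log h2 (by exact_mod_cast hNle n)
    _ = ((F n).card : ℝ) * Real.log M := by rw [Nat.cast_pow, Real.log_pow]
  refine hRelU_zero_of_eventually_le_tendsto (w := fun n =>
    ENNReal.ofReal (((F n).card : ℝ) * Real.log M) /
      ENNReal.ofReal (((F n).card : ℝ) ^ (2 : ℝ))) (fun n => ?_) ?_
  · exact ENNReal.div_le_div_right (ENNReal.ofReal_le_ofReal (hlog n)) _
  · have hev : ∀ᶠ n in atTop, ENNReal.ofReal (Real.log M / ((F n).card : ℝ)) =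
        ENNReal.ofReal (((F n).card : ℝ) * Real.log M) /
          ENNReal.ofReal (((F n).card : ℝ) ^ (2 : ℝ)) := by
      filter_upwards [hc.eventually_ge_atTop 1] with n hn
      have hpos : (0 : ℝ) < ((F n).card : ℝ) := by exact_mod_cast hn
      have hsq : ((F n).card : ℝ) ^ (2 : ℝ) = ((F n).card : ℝ) * ((F n).card : ℝ) := by
        rw [Real.rpow_two]; ring
      rw [← ENNReal.ofReal_div_of_pos (by rw [hsq]; positivity)]
      congr 1
      rw [hsq]
      field_simp
    refine Tendsto.congr' hev ?_
    have h1 : Tendsto (fun n => Real.log M / ((F n).card : ℝ)) atTop (nhds 0) :=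
      (tendsto_const_div_atTop_nhds_zero_nat (Real.log M)).comp hc
    have := ENNReal.tendsto_ofReal h1
    simpa using this

lemma DU_eq_zero_of_subsingleton {F : ℕ → Finset G} {𝒰 : Set (Set X)} {π : X → Y}
    (hsub : ∀ a b : X, a = b) (hcov : ⋃₀ 𝒰 = Set.univ) : DU F 𝒰 π = 0 := by
  classical
  refine DU_eq_zero_of_zero_mem ?_
  have hN : ∀ B : Finset G, ∀ y : Y, coverNum (dynJoin B 𝒰) (π ⁻¹' {y}) ≤ 1 := by
    intro B y
    rcases Set.eq_empty_or_nonempty (π ⁻¹' {y}) with h | h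
    · refine le_trans (coverNum_le_card ∅ (by simp) (by simp [h])) (by simp)
    · obtain ⟨x, hx⟩ := h
      obtain ⟨T, hT1, hT2⟩ := dynJoin_mem_of_forall hcov B x
      refine le_trans (coverNum_le_card {T} (by simpa using hT1) ?_) (by simp)
      intro z hz
      have : z = x := hsub z x
      subst this
      simpa using hT2
  have hle : ∀ n, NRel (dynJoin (F n) 𝒰) π ≤ 1 := fun n => NRel_le (hN (F n))
  have : ∀ n, ENNReal.ofReal (Real.log (NRel (dynJoin (F n) 𝒰) π)) /
      ENNReal.ofReal (((F n).card : ℝ) ^ (0 : ℝ)) = 0 := by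
    intro n
    have hlog : Real.log (NRel (dynJoin (F n) 𝒰) π) ≤ 0 := by
      rcases Nat.le_one_iff_eq_zero_or_eq_one.mp (hle n) with h | h <;> rw [h] <;> simp
    rw [ENNReal.ofReal_eq_zero.mpr hlog, ENNReal.zero_div]
  unfold hRelU
  rw [limsup_congr (Eventually.of_forall this), limsup_const]

lemma eventually_const_or_tendsto (F : ℕ → Finset G) (hFmono : ∀ n, F n ⊆ F (n + 1)) :
    (∃ n₀, ∀ n, n₀ ≤ n → F n = F n₀) ∨ Tendsto (fun n => (F n).card) atTop atTop := by
  classical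
  have hmono : Monotone F := monotone_nat_of_le_succ hFmono
  have hcard : Monotone fun n => (F n).card := fun a b hab => Finset.card_le_card (hmono hab)
  by_cases hbdd : ∃ K, ∀ n, (F n).card ≤ K
  · left
    obtain ⟨K, hK⟩ := hbdd
    have hne : (Set.range fun n => (F n).card).Nonempty := ⟨(F 0).card, 0, rfl⟩
    have hbddr : BddAbove (Set.range fun n => (F n).card) := ⟨K, by rintro _ ⟨n, rfl⟩; exact hK n⟩
    set m := sSup (Set.range fun n => (F n).card) with hm
    have hmem : m ∈ Set.range fun n => (F n).card := Nat.sSup_mem hne hbddr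
    obtain ⟨n₀, hn₀⟩ := hmem
    refine ⟨n₀, fun n hn => ?_⟩
    have h1 : F n₀ ⊆ F n := hmono hn
    have h2 : (F n).card ≤ (F n₀).card := by
      have := le_csSup hbddr (Set.mem_range_self (f := fun n => (F n).card) n)
      simp only at hn₀ this
      omega
    exact (Finset.eq_of_subset_of_card_le h1 h2).symm
  · right
    push_neg at hbdd
    exact hcard.tendsto_atTop_atTop fun K => (hbdd K).imp fun n hn => hn.le

lemma DU_eq_zero_of_eventually_const {F : ℕ → Finset G} {𝒰 : Set (Set X)} {π : X → Y}
    {n₀ : ℕ} (hconst : ∀ n, n₀ ≤ n → F n = F n₀) : DU F 𝒰 π = 0 := by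
  classical
  set N₀ := NRel (dynJoin (F n₀) 𝒰) π with hN₀
  set c₀ := (F n₀).card with hc₀
  have hval : ∀ α : ℝ, hRelU F 𝒰 π α =
      ENNReal.ofReal (Real.log N₀) / ENNReal.ofReal ((c₀ : ℝ) ^ α) := by
    intro α
    unfold hRelU
    have hev : ∀ᶠ n in atTop,
        ENNReal.ofReal (Real.log (NRel (dynJoin (F n) 𝒰) π)) /
          ENNReal.ofReal (((F n).card : ℝ) ^ α) =
        ENNReal.ofReal (Real.log N₀) / ENNReal.ofReal ((c₀ : ℝ) ^ α) := by
      filter_upwards [eventually_ge_atTop n₀] with n hn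
      rw [hconst n hn]
    rw [limsup_congr hev, limsup_const]
  by_cases h0 : ENNReal.ofReal (Real.log N₀) = 0
  · refine DU_eq_zero_of_zero_mem ?_
    rw [hval 0, h0, ENNReal.zero_div]
  · have hempty : {α : ℝ | 0 ≤ α ∧ hRelU F 𝒰 π α = 0} = ∅ := by
      ext α
      simp only [Set.mem_setOf_eq, Set.mem_empty_iff_false, iff_false, not_and]
      intro hα h
      rw [hval α] at h
      rcases ENNReal.div_eq_zero_iff.mp h with h' | h'
      · exact h0 h'
      · exact ENNReal.ofReal_ne_top h'
    unfold DU
    rw [hempty, Real.sInf_empty]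

end AuxLemmas4

section AuxLemmas5

lemma isOpenCover_of_standard {X : Type*} [TopologicalSpace X] {𝒲 : Set (Set X)}
    (h : IsStandardCover 𝒲) : IsOpenCover 𝒲 := by
  obtain ⟨U, V, rfl, hU, hV, hUV, -, -⟩ := h
  refine ⟨(Set.finite_singleton V).insert U, ?_, ?_⟩
  · rintro W hW
    rcases hW with rfl | hW
    · exact hU
    · rw [Set.mem_singleton_iff.mp hW]; exact hV
  · rw [Set.sUnion_insert, Set.sUnion_singleton, hUV]

lemma exists_standard_cover {X : Type*} [MetricSpace X] {p q : X} (hpq : p ≠ q) :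
    ∃ 𝒲 : Set (Set X), IsStandardCover 𝒲 := by
  set r := dist p q / 3 with hr
  have hD : 0 < dist p q := dist_pos.mpr hpq
  have hrpos : 0 < r := by positivity
  refine ⟨{(Metric.closedBall p r)ᶜ, (Metric.closedBall q r)ᶜ}, _, _, rfl,
    Metric.isClosed_closedBall.isOpen_compl, Metric.isClosed_closedBall.isOpen_compl, ?_, ?_, ?_⟩
  · ext z
    simp only [Set.mem_union, Set.mem_compl_iff, Metric.mem_closedBall, Set.mem_univ, iff_true]
    by_contra h
    push_neg at h
    have h1 := h.1
    have h2 := h.2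
    have := dist_triangle p z q
    rw [dist_comm p z] at this
    rw [hr] at h1 h2
    linarith
  · intro hdense
    obtain ⟨b, hb, hdist⟩ := Metric.mem_closure_iff.mp (hdense p) r hrpos
    simp only [Set.mem_compl_iff, Metric.mem_closedBall] at hb
    rw [dist_comm] at hdist
    exact hb hdist.le
  · intro hdense
    obtain ⟨b, hb, hdist⟩ := Metric.mem_closure_iff.mp (hdense q) r hrpos
    simp only [Set.mem_compl_iff, Metric.mem_closedBall] at hb
    rw [dist_comm] at hdist
    exact hb hdist.le

variable {G X Y : Type*} [Group G] [MulAction G X]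

lemma DU_le_two [TopologicalSpace X] {π : X → Y} (hsurj : Function.Surjective π)
    {F : ℕ → Finset G} (hFmono : ∀ n, F n ⊆ F (n + 1)) {𝒰 : Set (Set X)}
    (h𝒰 : IsOpenCover 𝒰) : DU F 𝒰 π ≤ 2 := by
  rcases eventually_const_or_tendsto F hFmono with ⟨n₀, hconst⟩ | htend
  · rw [DU_eq_zero_of_eventually_const hconst]; norm_num
  · rcases isEmpty_or_nonempty X with hX | hX
    · rw [DU_eq_zero_of_subsingleton (fun a b => (IsEmpty.false a).elim) h𝒰.2.2]; norm_num
    · obtain ⟨x₀⟩ := hX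
      exact DU_le_of_mem (by norm_num) (hRelU_two_eq_zero h𝒰.1 h𝒰.2.2 hsurj x₀ htend)

lemma DU_le_sSup_std [MetricSpace X] [CompactSpace X] {π : X → Y}
    (hsurj : Function.Surjective π) {F : ℕ → Finset G} (hFne : ∀ n, (F n).Nonempty)
    (hFmono : ∀ n, F n ⊆ F (n + 1))
    (htend : Tendsto (fun n => (F n).card) atTop atTop)
    {p q : X} (hpq : p ≠ q) {𝒰 : Set (Set X)} (h𝒰 : IsOpenCover 𝒰) :
    DU F 𝒰 π ≤ sSup {d : ℝ | ∃ 𝒲 : Set (Set X), IsStandardCover 𝒲 ∧ d = DU F 𝒲 π} := by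
  classical
  obtain ⟨hfin, hopen, hcov⟩ := h𝒰
  have hD : 0 < dist p q := dist_pos.mpr hpq
  obtain ⟨δ, hδpos, hleb⟩ := lebesgue_number_lemma_of_metric_sUnion isCompact_univ
    (fun t ht => hopen t ht) (by rw [hcov])
  set r := min (dist p q / 8) (δ / 3) with hrdef
  have hrpos : 0 < r := lt_min (by positivity) (by positivity)
  have hr8 : r ≤ dist p q / 8 := min_le_left _ _
  have hr3 : r ≤ δ / 3 := min_le_right _ _
  obtain ⟨t, ht⟩ := isCompact_univ.elim_finite_subcover (fun x : X => Metric.ball x r)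
    (fun _ => Metric.isOpen_ball) (fun z _ => Set.mem_iUnion.mpr ⟨z, Metric.mem_ball_self hrpos⟩)
  set W : {x // x ∈ t} → Set (Set X) :=
    fun i => {Metric.ball (i : X) (2 * r), (Metric.closedBall (i : X) r)ᶜ} with hW
  have hWfin : ∀ i, (W i).Finite := fun i => (Set.finite_singleton _).insert _
  have hWunion : ∀ i : {x // x ∈ t},
      Metric.ball (i : X) (2 * r) ∪ (Metric.closedBall (i : X) r)ᶜ = Set.univ := by
    intro i
    ext z
    simp only [Set.mem_union, Set.mem_compl_iff, Metric.mem_closedBall, Metric.mem_ball,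
      Set.mem_univ, iff_true]
    by_cases h : dist z (i : X) ≤ r
    · exact Or.inl (by linarith)
    · exact Or.inr h
  have hWcov : ∀ i, ⋃₀ W i = Set.univ := by
    intro i
    rw [hW]
    rw [Set.sUnion_insert, Set.sUnion_singleton]
    exact hWunion i
  have hWstd : ∀ i, IsStandardCover (W i) := by
    intro i
    refine ⟨_, _, rfl, Metric.isOpen_ball, Metric.isClosed_closedBall.isOpen_compl,
      hWunion i, ?_, ?_⟩
    · -- the ball of radius 2r is not dense
      intro hdense
      -- find a far point
      obtain ⟨y, hy⟩ : ∃ y : X, dist p q / 2 ≤ dist (i : X) y := by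
        rcases le_or_gt (dist p q / 2) (dist (i : X) p) with h | h
        · exact ⟨p, h⟩
        · refine ⟨q, ?_⟩
          have := dist_triangle p (i : X) q
          rw [dist_comm p (i : X)] at this
          linarith
      obtain ⟨b, hb, hdist⟩ := Metric.mem_closure_iff.mp (hdense y) r hrpos
      rw [Metric.mem_ball] at hb
      have h1 := dist_triangle (i : X) b y
      rw [dist_comm (i : X) b] at h1
      rw [dist_comm y b] at hdist
      linarith
    · intro hdense
      obtain ⟨b, hb, hdist⟩ := Metric.mem_closure_iff.mp (hdense (i : X)) r hrpos
      simp only [Set.mem_compl_iff, Metric.mem_closedBall] at hb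
      rw [dist_comm] at hdist
      exact hb hdist.le
  have href : ∀ c : {x // x ∈ t} → Set X, (∀ i, c i ∈ W i) →
      ∃ U ∈ 𝒰, (⋂ i, c i) ⊆ U := by
    intro c hc
    by_cases h : ∃ i, c i = Metric.ball (i : X) (2 * r)
    · obtain ⟨i, hi⟩ := h
      obtain ⟨U, hU, hsub⟩ := hleb (i : X) (Set.mem_univ _)
      refine ⟨U, hU, fun z hz => hsub ?_⟩
      have := Set.mem_iInter.mp hz i
      rw [hi] at this
      exact Metric.ball_subset_ball (by linarith) this
    · push_neg at h
      have hc' : ∀ i, c i = (Metric.closedBall (i : X) r)ᶜ := by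
        intro i
        rcases hc i with h' | h'
        · exact absurd h' (h i)
        · exact Set.mem_singleton_iff.mp h'
      have hp : p ∈ ⋃₀ 𝒰 := by rw [hcov]; trivial
      obtain ⟨U, hU, -⟩ := hp
      refine ⟨U, hU, fun z hz => ?_⟩
      exfalso
      obtain ⟨x, hxt, hzx⟩ := Set.mem_iUnion₂.mp (ht (Set.mem_univ z))
      have hzi := Set.mem_iInter.mp hz ⟨x, hxt⟩
      rw [hc' ⟨x, hxt⟩] at hzi
      simp only [Set.mem_compl_iff, Metric.mem_closedBall] at hzi
      rw [Metric.mem_ball] at hzx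
      exact hzi hzx.le
  -- now the dimension comparison
  set RHS := {d : ℝ | ∃ 𝒲 : Set (Set X), IsStandardCover 𝒲 ∧ d = DU F 𝒲 π} with hRHS
  have hBdd : BddAbove RHS := by
    refine ⟨2, ?_⟩
    rintro d ⟨𝒲, h𝒲, rfl⟩
    exact DU_le_two hsurj hFmono (isOpenCover_of_standard h𝒲)
  have hs0 : 0 ≤ sSup RHS := by
    obtain ⟨𝒲₀, h𝒲₀⟩ := exists_standard_cover hpq
    exact le_trans (DU_nonneg F 𝒲₀ π) (le_csSup hBdd ⟨𝒲₀, h𝒲₀, rfl⟩)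
  refine le_of_forall_pos_le_add fun ε hε => ?_
  set α := sSup RHS + ε with hα
  have hα0 : 0 ≤ α := by positivity
  have hi : ∀ i, hRelU F (W i) π α = 0 := by
    intro i
    have h2 : hRelU F (W i) π 2 = 0 :=
      hRelU_two_eq_zero (hWfin i) (hWcov i) hsurj p htend
    have hne_i : {β : ℝ | 0 ≤ β ∧ hRelU F (W i) π β = 0}.Nonempty :=
      ⟨2, by norm_num, h2⟩
    have hlt : DU F (W i) π < α :=
      lt_of_le_of_lt (le_csSup hBdd ⟨W i, hWstd i, rfl⟩) (lt_add_of_pos_right _ hε)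
    unfold DU at hlt
    obtain ⟨β, hβmem, hβlt⟩ := exists_lt_of_csInf_lt hne_i hlt
    have := hRelU_mono (𝒰 := W i) (π := π) hFne hβmem.1 hβlt.le
    rw [hβmem.2] at this
    exact le_antisymm this zero_le
  exact DU_le_of_mem hα0
    (hRelU_eq_zero_of_refine hWfin hWcov href hfin hcov hsurj (π p) hi)

end AuxLemmas5

theorem stmt8 {G X Y : Type*} [Group G] [Countable G]
    [MetricSpace X] [CompactSpace X] [MetricSpace Y] [CompactSpace Y]
    [MulAction G X] [MulAction G Y]
    (hcX : ∀ g : G, Continuous fun x : X => g • x)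
    (hcY : ∀ g : G, Continuous fun y : Y => g • y)
    (π : X → Y) (hπ : IsFactorMap G π)
    (F : ℕ → Finset G) (hF : IsFolnerSeq G F) (hFmono : ∀ n, F n ⊆ F (n + 1)) :
    DUSys F π = sSup {d : ℝ | ∃ 𝒲 : Set (Set X), IsStandardCover 𝒲 ∧ d = DU F 𝒲 π} := by
  classical
  have hsurj : Function.Surjective π := hπ.2.1
  have hFne : ∀ n, (F n).Nonempty := hF.1
  set LHS := {d : ℝ | ∃ 𝒰 : Set (Set X), IsOpenCover 𝒰 ∧ d = DU F 𝒰 π} with hLHS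
  set RHS := {d : ℝ | ∃ 𝒲 : Set (Set X), IsStandardCover 𝒲 ∧ d = DU F 𝒲 π} with hRHS
  have hBddL : BddAbove LHS := by
    refine ⟨2, ?_⟩
    rintro d ⟨𝒰, h𝒰, rfl⟩
    exact DU_le_two hsurj hFmono h𝒰
  have hunivmem : DU F {Set.univ} π ∈ LHS :=
    ⟨{Set.univ}, ⟨Set.finite_singleton _, fun U hU => by
      rw [Set.mem_singleton_iff.mp hU]; exact isOpen_univ, by simp⟩, rfl⟩
  have h0L : 0 ≤ sSup LHS := le_trans (DU_nonneg F {Set.univ} π) (le_csSup hBddL hunivmem)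
  have h0R : 0 ≤ sSup RHS := by
    rcases Set.eq_empty_or_nonempty RHS with h | ⟨d, hd⟩
    · rw [h, Real.sSup_empty]
    · obtain ⟨𝒲, h𝒲, rfl⟩ := hd
      refine le_trans (DU_nonneg F 𝒲 π) (le_csSup ?_ ⟨𝒲, h𝒲, rfl⟩)
      refine ⟨2, ?_⟩
      rintro d' ⟨𝒲', h𝒲', rfl⟩
      exact DU_le_two hsurj hFmono (isOpenCover_of_standard h𝒲')
  show sSup LHS = sSup RHS
  refine le_antisymm ?_ ?_
  · refine Real.sSup_le ?_ h0R
    rintro d ⟨𝒰, h𝒰, rfl⟩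
    rcases eventually_const_or_tendsto F hFmono with ⟨n₀, hconst⟩ | htend
    · rw [DU_eq_zero_of_eventually_const hconst]; exact h0R
    · by_cases hsub : ∀ a b : X, a = b
      · rw [DU_eq_zero_of_subsingleton hsub h𝒰.2.2]; exact h0R
      · push_neg at hsub
        obtain ⟨p, q, hpq⟩ := hsub
        exact DU_le_sSup_std hsurj hFne hFmono htend hpq h𝒰
  · refine Real.sSup_le ?_ h0L
    rintro d ⟨𝒲, h𝒲, rfl⟩
    exact le_csSup hBddL ⟨𝒲, isOpenCover_of_standard h𝒲, rfl⟩
end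

section
/- Let π : (X,G) → (Y,G) be a factor map and U a finite open cover of X. Then D_e(G,U|π) ≤ D(G,U|π), i.e., the supremum of lower dimensions D(S) over all relative entropy generating sets S of U is at most the relative lower entropy dimension of U. -/
open Filter Topology Pointwise
open scoped ENNReal

section Aux

variable {G X Y : Type*} [Group G] [MulAction G X]

private lemma dynJoin_subset_range (B : Finset G) (𝒰 : Set (Set X)) :
    dynJoin B 𝒰 ⊆ Set.range (fun f : {g : G // g ∈ B} → ↥𝒰 =>
      ⋂ g : {g : G // g ∈ B}, (fun x => (g : G) • x) ⁻¹' (f g : Set X)) := by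
  rintro W ⟨f, hf, rfl⟩
  refine ⟨fun g => ⟨f g, hf g g.2⟩, ?_⟩
  ext x
  simp only [Set.mem_iInter, Set.mem_preimage]
  exact ⟨fun h g hg => h ⟨g, hg⟩, fun h g => h g g.2⟩

private lemma dynJoin_finite (B : Finset G) {𝒰 : Set (Set X)} (h : 𝒰.Finite) :
    (dynJoin B 𝒰).Finite := by
  have : Finite ↥𝒰 := h
  exact (Set.finite_range _).subset (dynJoin_subset_range B 𝒰)

private lemma dynJoin_ncard_le (B : Finset G) {𝒰 : Set (Set X)} (h : 𝒰.Finite) :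
    (dynJoin B 𝒰).ncard ≤ (𝒰.ncard + 1) ^ B.card := by
  have : Finite ↥𝒰 := h
  calc (dynJoin B 𝒰).ncard
      ≤ (Set.range (fun f : {g : G // g ∈ B} → ↥𝒰 =>
          ⋂ g : {g : G // g ∈ B}, (fun x => (g : G) • x) ⁻¹' (f g : Set X))).ncard :=
        Set.ncard_le_ncard (dynJoin_subset_range B 𝒰) (Set.finite_range _)
    _ ≤ Nat.card ({g : G // g ∈ B} → ↥𝒰) := by
        rw [← Set.image_univ]
        exact (Set.ncard_image_le (Set.finite_univ)).trans
          (le_of_eq (by rw [Set.ncard_univ]))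
    _ = 𝒰.ncard ^ B.card := by
        rw [Nat.card_fun, Nat.card_coe_set_eq]
        congr 1
        simp [Nat.card_eq_fintype_card]
    _ ≤ (𝒰.ncard + 1) ^ B.card := Nat.pow_le_pow_left (Nat.le_succ _) _

private lemma dynJoin_cover (B : Finset G) {𝒰 : Set (Set X)} (h : ⋃₀ 𝒰 = Set.univ) :
    ⋃₀ dynJoin B 𝒰 = Set.univ := by
  ext x
  simp only [Set.mem_univ, iff_true, Set.mem_sUnion]
  have hex : ∀ g : G, ∃ U, U ∈ 𝒰 ∧ g • x ∈ U := by
    intro g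
    have : g • x ∈ ⋃₀ 𝒰 := h ▸ Set.mem_univ _
    simpa [Set.mem_sUnion] using this
  choose f hf1 hf2 using hex
  exact ⟨_, ⟨f, fun g _ => hf1 g, rfl⟩, by
    simp only [Set.mem_iInter, Set.mem_preimage]
    exact fun g _ => hf2 g⟩

private lemma coverNum_le_card_s11 (𝒰' : Set (Set X)) (E : Set X) (h : 𝒰'.Finite)
    (hc : E ⊆ ⋃₀ 𝒰') : coverNum 𝒰' E ≤ h.toFinset.card :=
  Nat.sInf_le ⟨h.toFinset, by simp, rfl, by rwa [Set.Finite.coe_toFinset]⟩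

private lemma coverNum_setNonempty {𝒰 : Set (Set X)} (hfin : 𝒰.Finite)
    (hcov : ⋃₀ 𝒰 = Set.univ) (B : Finset G) (E : Set X) :
    {k | ∃ t : Finset (Set X), ↑t ⊆ dynJoin B 𝒰 ∧ t.card = k ∧
        E ⊆ ⋃₀ (t : Set (Set X))}.Nonempty := by
  refine ⟨(dynJoin_finite B hfin).toFinset.card, (dynJoin_finite B hfin).toFinset, by simp,
    rfl, ?_⟩
  rw [Set.Finite.coe_toFinset, dynJoin_cover B hcov]
  exact Set.subset_univ E

private lemma coverNum_dynJoin_le_pow {𝒰 : Set (Set X)} (hfin : 𝒰.Finite)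
    (hcov : ⋃₀ 𝒰 = Set.univ) (B : Finset G) (E : Set X) :
    coverNum (dynJoin B 𝒰) E ≤ (𝒰.ncard + 1) ^ B.card := by
  refine (coverNum_le_card_s11 _ E (dynJoin_finite B hfin) ?_).trans ?_
  · rw [dynJoin_cover B hcov]; exact Set.subset_univ E
  · rw [← Set.ncard_eq_toFinset_card _ (dynJoin_finite B hfin)]
    exact dynJoin_ncard_le B hfin

private lemma coverNum_dynJoin_mono {𝒰 : Set (Set X)} (hfin : 𝒰.Finite)
    (hcov : ⋃₀ 𝒰 = Set.univ) {B₁ B₂ : Finset G} (hB : B₁ ⊆ B₂) (E : Set X) :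
    coverNum (dynJoin B₁ 𝒰) E ≤ coverNum (dynJoin B₂ 𝒰) E := by
  obtain ⟨t, ht𝒰, htc, htE⟩ := Nat.sInf_mem (coverNum_setNonempty hfin hcov B₂ E)
  classical
  have hex : ∀ W : Set X, ∃ W', W ∈ dynJoin B₂ 𝒰 → W' ∈ dynJoin B₁ 𝒰 ∧ W ⊆ W' := by
    intro W
    by_cases hW : W ∈ dynJoin B₂ 𝒰
    · obtain ⟨f, hf, rfl⟩ := hW
      refine ⟨⋂ g ∈ B₁, (fun x => g • x) ⁻¹' f g,
        fun _ => ⟨⟨f, fun g hg => hf g (hB hg), rfl⟩, ?_⟩⟩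
      intro x hx
      simp only [Set.mem_iInter, Set.mem_preimage] at hx ⊢
      exact fun g hg => hx g (hB hg)
    · exact ⟨W, fun h => absurd h hW⟩
  choose sh hsh using hex
  have htc' : t.card = coverNum (dynJoin B₂ 𝒰) E := htc
  refine le_trans (Nat.sInf_le ⟨t.image sh, ?_, rfl, ?_⟩) ?_
  · intro W hW
    simp only [Finset.coe_image, Set.mem_image, Finset.mem_coe] at hW
    obtain ⟨V, hV, rfl⟩ := hW
    exact (hsh V (ht𝒰 hV)).1
  · intro x hx
    obtain ⟨V, hV, hxV⟩ := htE hx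
    exact ⟨sh V, by
      simp only [Finset.coe_image, Set.mem_image, Finset.mem_coe]
      exact ⟨V, hV, rfl⟩, (hsh V (ht𝒰 hV)).2 hxV⟩
  · rw [← htc']
    exact Finset.card_image_le

private lemma NRel_dynJoin_le_pow {𝒰 : Set (Set X)} (hfin : 𝒰.Finite)
    (hcov : ⋃₀ 𝒰 = Set.univ) (B : Finset G) (π : X → Y) :
    NRel (dynJoin B 𝒰) π ≤ (𝒰.ncard + 1) ^ B.card :=
  ciSup_le' fun y => coverNum_dynJoin_le_pow hfin hcov B _

private lemma NRel_dynJoin_mono {𝒰 : Set (Set X)} (hfin : 𝒰.Finite)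
    (hcov : ⋃₀ 𝒰 = Set.univ) {B₁ B₂ : Finset G} (hB : B₁ ⊆ B₂) (π : X → Y) :
    NRel (dynJoin B₁ 𝒰) π ≤ NRel (dynJoin B₂ 𝒰) π := by
  refine ciSup_le' fun y => (coverNum_dynJoin_mono hfin hcov hB _).trans ?_
  exact le_ciSup (f := fun y : Y => coverNum (dynJoin B₂ 𝒰) (π ⁻¹' {y}))
    ⟨(𝒰.ncard + 1) ^ B₂.card, by
      rintro k ⟨y, rfl⟩; exact coverNum_dynJoin_le_pow hfin hcov B₂ _⟩ y

private lemma ofReal_log_nat_mono {m n : ℕ} (h : m ≤ n) :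
    ENNReal.ofReal (Real.log m) ≤ ENNReal.ofReal (Real.log n) := by
  rcases Nat.eq_zero_or_pos m with hm | hm
  · simp [hm]
  · exact ENNReal.ofReal_le_ofReal
      (Real.log_le_log (by exact_mod_cast hm) (by exact_mod_cast h))

end Aux

theorem stmt11 {G X Y : Type*} [Group G] [Countable G]
    [MetricSpace X] [CompactSpace X] [MetricSpace Y] [CompactSpace Y]
    [MulAction G X] [MulAction G Y]
    (hcX : ∀ g : G, Continuous fun x : X => g • x)
    (hcY : ∀ g : G, Continuous fun y : Y => g • y)
    (π : X → Y) (hπ : IsFactorMap G π)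
    (F : ℕ → Finset G) (hF : IsFolnerSeq G F) (hFmono : ∀ n, F n ⊆ F (n + 1))
    (𝒰 : Set (Set X)) (h𝒰 : IsOpenCover 𝒰) :
    DeL F 𝒰 π ≤ DL F 𝒰 π := by
  have hfin := h𝒰.1
  have hcov := h𝒰.2.2
  have hDL0 : 0 ≤ DL F 𝒰 π := Real.sInf_nonneg fun x hx => hx.1
  refine Real.sSup_le ?_ hDL0
  rintro d ⟨S, hS, rfl⟩
  have hcard : Tendsto (fun n => (interF (F n) S).card) atTop atTop := hS.1
  have hFcard : Tendsto (fun n => (F n).card) atTop atTop :=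
    tendsto_atTop_mono (fun n => Finset.card_le_card
      (@Finset.filter_subset G (fun g => g ∈ S) (Classical.decPred _) (F n))) hcard
  -- the set defining `DL` is nonempty : `α = 2` works
  have h2 : hRelL F 𝒰 π 2 = 0 := by
    set L := Real.log ((𝒰.ncard : ℝ) + 1) with hLdef
    have hub : ∀ᶠ n in atTop,
        ENNReal.ofReal (Real.log (NRel (dynJoin (F n) 𝒰) π)) /
          ENNReal.ofReal (((F n).card : ℝ) ^ (2 : ℝ)) ≤
        ENNReal.ofReal (L / ((F n).card : ℝ)) := by
      filter_upwards [hFcard.eventually_ge_atTop 1] with n hn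
      set x := ((F n).card : ℝ) with hxdef
      have hx1 : (1 : ℝ) ≤ x := by rw [hxdef]; exact_mod_cast hn
      have hx0 : (0 : ℝ) < x := lt_of_lt_of_le one_pos hx1
      have hL0 : 0 ≤ L := hLdef ▸ Real.log_nonneg (le_add_of_nonneg_left (by positivity))
      have hlog : Real.log (NRel (dynJoin (F n) 𝒰) π) ≤ x * L := by
        rcases Nat.eq_zero_or_pos (NRel (dynJoin (F n) 𝒰) π) with h0 | hpos
        · rw [h0]
          simp only [Nat.cast_zero, Real.log_zero]
          positivity
        · calc Real.log (NRel (dynJoin (F n) 𝒰) π)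
              ≤ Real.log ((((𝒰.ncard + 1) ^ (F n).card : ℕ) : ℝ)) :=
                Real.log_le_log (by exact_mod_cast hpos)
                  (by exact_mod_cast NRel_dynJoin_le_pow hfin hcov (F n) π)
            _ = x * L := by
                push_cast
                rw [Real.log_pow, ← hLdef, ← hxdef]
      have hxpow : x ^ (2 : ℝ) = x * x := by
        rw [show (2 : ℝ) = ((2 : ℕ) : ℝ) by norm_num, Real.rpow_natCast]
        ring
      calc ENNReal.ofReal (Real.log (NRel (dynJoin (F n) 𝒰) π)) /
            ENNReal.ofReal (x ^ (2 : ℝ))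
          ≤ ENNReal.ofReal (x * L) / ENNReal.ofReal (x ^ (2 : ℝ)) :=
            ENNReal.div_le_div (ENNReal.ofReal_le_ofReal hlog) le_rfl
        _ = ENNReal.ofReal (x * L / (x * x)) := by
            rw [hxpow, ENNReal.ofReal_div_of_pos (by positivity)]
        _ = ENNReal.ofReal (L / x) := by
            rw [mul_div_mul_left _ _ (ne_of_gt hx0)]
    have htend : Tendsto (fun n => ENNReal.ofReal (L / ((F n).card : ℝ))) atTop (𝓝 0) := by
      have : Tendsto (fun n => L / ((F n).card : ℝ)) atTop (𝓝 0) :=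
        Tendsto.div_atTop tendsto_const_nhds (tendsto_natCast_atTop_atTop.comp hFcard)
      simpa using ENNReal.tendsto_ofReal this
    refine le_antisymm ?_ zero_le
    calc hRelL F 𝒰 π 2
        ≤ atTop.liminf (fun n => ENNReal.ofReal (L / ((F n).card : ℝ))) :=
          Filter.liminf_le_liminf hub
      _ = 0 := htend.liminf_eq
  -- key step: every `α` admissible for `DL` is admissible for `lowerDim F S`
  have key : ∀ α : ℝ, hRelL F 𝒰 π α = 0 → DlowAt F S α = 0 := by
    intro α hα0
    obtain ⟨c, hc0, hcL⟩ := exists_between hS.2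
    have hcne : c ≠ ⊤ := hcL.ne_top
    have hev1 : ∀ᶠ n in atTop, c < entAlong F S 𝒰 π n :=
      Filter.eventually_lt_of_lt_liminf hcL
    have hev2 : ∀ᶠ n in atTop, 1 ≤ (interF (F n) S).card := hcard.eventually_ge_atTop 1
    have hble : ∀ᶠ n in atTop,
        ((interF (F n) S).card : ℝ≥0∞) / ENNReal.ofReal (((F n).card : ℝ) ^ α) ≤
        (ENNReal.ofReal (Real.log (NRel (dynJoin (F n) 𝒰) π)) /
          ENNReal.ofReal (((F n).card : ℝ) ^ α)) / c := by
      filter_upwards [hev1, hev2] with n h1 h2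
      set k : ℝ≥0∞ := ((interF (F n) S).card : ℝ≥0∞) with hkdef
      have hk0 : k ≠ 0 := by
        simp only [hkdef, ne_eq, Nat.cast_eq_zero]
        omega
      have hkt : k ≠ ⊤ := ENNReal.natCast_ne_top _
      have h1' : c * k <
          ENNReal.ofReal (Real.log (NRel (dynJoin (interF (F n) S) 𝒰) π)) := by
        have h1'' : c < ENNReal.ofReal
            (Real.log (NRel (dynJoin (interF (F n) S) 𝒰) π)) / k := h1
        exact (ENNReal.lt_div_iff_mul_lt (Or.inl hk0) (Or.inl hkt)).mp h1''
      have hkle : k ≤ ENNReal.ofReal (Real.log (NRel (dynJoin (F n) 𝒰) π)) / c := by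
        rw [ENNReal.le_div_iff_mul_le (Or.inl hc0.ne') (Or.inl hcne)]
        calc k * c = c * k := mul_comm _ _
          _ ≤ ENNReal.ofReal (Real.log (NRel (dynJoin (interF (F n) S) 𝒰) π)) := h1'.le
          _ ≤ ENNReal.ofReal (Real.log (NRel (dynJoin (F n) 𝒰) π)) :=
              ofReal_log_nat_mono
                (NRel_dynJoin_mono hfin hcov (@Finset.filter_subset G (fun g => g ∈ S) (Classical.decPred _) (F n)) π)
      calc k / ENNReal.ofReal (((F n).card : ℝ) ^ α)
          ≤ (ENNReal.ofReal (Real.log (NRel (dynJoin (F n) 𝒰) π)) / c) /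
              ENNReal.ofReal (((F n).card : ℝ) ^ α) := ENNReal.div_le_div hkle le_rfl
        _ = (ENNReal.ofReal (Real.log (NRel (dynJoin (F n) 𝒰) π)) /
              ENNReal.ofReal (((F n).card : ℝ) ^ α)) / c := by
            rw [div_eq_mul_inv, div_eq_mul_inv, div_eq_mul_inv, div_eq_mul_inv,
              mul_right_comm]
    refine le_antisymm ?_ zero_le
    refine ENNReal.le_of_forall_pos_le_add fun ε hε _ => ?_
    rw [zero_add]
    have hεc : (0 : ℝ≥0∞) < (ε : ℝ≥0∞) * c :=
      ENNReal.mul_pos (by exact_mod_cast hε.ne') hc0.ne'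
    have hlt : atTop.liminf (fun n =>
        ENNReal.ofReal (Real.log (NRel (dynJoin (F n) 𝒰) π)) /
          ENNReal.ofReal (((F n).card : ℝ) ^ α)) < (ε : ℝ≥0∞) * c := by
      have h := hα0
      simp only [hRelL] at h
      rw [h]
      exact hεc
    have hfreq := Filter.frequently_lt_of_liminf_lt (by isBoundedDefault) hlt
    simp only [DlowAt]
    refine Filter.liminf_le_of_frequently_le ?_
    refine (hfreq.and_eventually hble).mono ?_
    rintro n ⟨ha, hb⟩
    refine hb.trans ?_
    rw [ENNReal.div_le_iff_le_mul (Or.inl hc0.ne') (Or.inl hcne)]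
    exact ha.le
  exact le_csInf ⟨2, by norm_num, h2⟩ fun α hα =>
    csInf_le ⟨0, fun x hx => hx.1⟩ ⟨hα.1, key α hα.2⟩
end
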